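/- Let (f_n : P¹(ℂ) → P¹(ℂ)) be a sequence of rational maps all of the same degree d ≥ 1. Then there exist a subsequence (f_{n_k}) and Möbius transformations (M_{n_k}) such that M_{n_k} ∘ f_{n_k} converges, uniformly on compact subsets of the complement of a finite set of points of P¹(ℂ), to a nonconstant rational map f. -/

import Mathlib

noncomputable section

/-- The topology of the one-point compactification on `Option ℂ = P¹(ℂ)`. -/
instance : TopologicalSpace (Option ℂ) :=
  inferInstanceAs (TopologicalSpace (OnePoint ℂ))

/-- The Möbius map `z ↦ (a z + b)/(c z + d)` on the Riemann sphere `P¹(ℂ) = Option ℂ`. -/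
def moebiusMap (a b c d : ℂ) : Option ℂ → Option ℂ :=
  fun z => z.elim (if c = 0 then none else some (a / c))
    (fun w => if c * w + d = 0 then none else some ((a * w + b) / (c * w + d)))

/-- A Möbius transformation of the Riemann sphere. -/
def IsMoebius (φ : Option ℂ → Option ℂ) : Prop :=
  ∃ a b c d : ℂ, a * d - b * c ≠ 0 ∧ φ = moebiusMap a b c d

/-- The chordal (spherical) metric on the Riemann sphere `P¹(ℂ) = Option ℂ`. -/
def chordal : Option ℂ → Option ℂ → ℝ := fun z w =>
  z.elim (w.elim 0 fun b => 2 / Real.sqrt (1 + ‖b‖ ^ 2))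
    (fun a => w.elim (2 / Real.sqrt (1 + ‖a‖ ^ 2))
      (fun b => 2 * ‖a - b‖ /
        (Real.sqrt (1 + ‖a‖ ^ 2) * Real.sqrt (1 + ‖b‖ ^ 2))))

/-- The rational map `p/q` on the Riemann sphere `P¹(ℂ) = Option ℂ`. -/
def ratMap (p q : Polynomial ℂ) : Option ℂ → Option ℂ :=
  fun z => z.elim
    (if q.natDegree < p.natDegree then none
     else if p.natDegree < q.natDegree then some 0
     else some (p.leadingCoeff / q.leadingCoeff))
    (fun w => if q.eval w = 0 then none else some (p.eval w / q.eval w))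

section Helpers

open Polynomial
open scoped InnerProductSpace

instance : T2Space (Option ℂ) := inferInstanceAs (T2Space (OnePoint ℂ))

variable {E : Type*} [NormedAddCommGroup E] [InnerProductSpace ℂ E]

/-- Two-vector Gram–Schmidt with explicit triangular coefficients. -/
lemma gs_two (v1 v2 : E) (h1 : v1 ≠ 0) (h2 : ∀ t : ℂ, v2 ≠ t • v1) :
    ∃ a b c : ℂ, a ≠ 0 ∧ c ≠ 0 ∧ ‖a • v1‖ = 1 ∧ ‖b • v1 + c • v2‖ = 1 ∧
      ⟪a • v1, b • v1 + c • v2⟫_ℂ = 0 := by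
  have hn1 : ‖v1‖ ≠ 0 := norm_ne_zero_iff.2 h1
  set a : ℂ := ((‖v1‖ : ℂ))⁻¹ with ha_def
  have ha : a ≠ 0 := by
    simp [ha_def, Complex.ofReal_eq_zero, hn1]
  have hnormc : ‖a‖ = ‖v1‖⁻¹ := by
    rw [ha_def, norm_inv, Complex.norm_real, Real.norm_of_nonneg (norm_nonneg _)]
  have hu1 : ‖a • v1‖ = 1 := by
    rw [norm_smul, hnormc, inv_mul_cancel₀ hn1]
  set u1 : E := a • v1 with hu1_def
  set c0 : ℂ := ⟪u1, v2⟫_ℂ with hc0_def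
  set w : E := v2 - c0 • u1 with hw_def
  have hw : w ≠ 0 := by
    intro h
    apply h2 (c0 * a)
    have : v2 = c0 • u1 := by rwa [hw_def, sub_eq_zero] at h
    rw [this, hu1_def, smul_smul]
  have hnw : ‖w‖ ≠ 0 := norm_ne_zero_iff.2 hw
  set g : ℂ := ((‖w‖ : ℂ))⁻¹ with hg_def
  have hg : g ≠ 0 := by simp [hg_def, Complex.ofReal_eq_zero, hnw]
  have hnormg : ‖g‖ = ‖w‖⁻¹ := by
    rw [hg_def, norm_inv, Complex.norm_real, Real.norm_of_nonneg (norm_nonneg _)]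
  refine ⟨a, -(g * c0 * a), g, ha, hg, hu1, ?_, ?_⟩
  · have hexp : (-(g * c0 * a)) • v1 + g • v2 = g • w := by
      rw [hw_def, smul_sub, hu1_def, smul_smul, smul_smul]
      module
    rw [hexp, norm_smul, hnormg, inv_mul_cancel₀ hnw]
  · have hexp : (-(g * c0 * a)) • v1 + g • v2 = g • w := by
      rw [hw_def, smul_sub, hu1_def, smul_smul, smul_smul]
      module
    rw [hexp, hw_def, inner_smul_right, inner_sub_right, inner_smul_right, ← hc0_def,
      ← hu1_def, inner_self_eq_norm_sq_to_K, hu1]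
    simp

lemma chordal_le (x y : ℂ) : chordal (some x) (some y) ≤ 2 * ‖x - y‖ := by
  have h1 : (1:ℝ) ≤ Real.sqrt (1 + ‖x‖ ^ 2) := by
    have := Real.sqrt_le_sqrt (show (1:ℝ) ≤ 1 + ‖x‖ ^ 2 by
      nlinarith [sq_nonneg (‖x‖)])
    simpa using this
  have h2 : (1:ℝ) ≤ Real.sqrt (1 + ‖y‖ ^ 2) := by
    have := Real.sqrt_le_sqrt (show (1:ℝ) ≤ 1 + ‖y‖ ^ 2 by
      nlinarith [sq_nonneg (‖y‖)])
    simpa using this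
  have heq : chordal (some x) (some y) = 2 * ‖x - y‖ /
      (Real.sqrt (1 + ‖x‖ ^ 2) * Real.sqrt (1 + ‖y‖ ^ 2)) := rfl
  rw [heq]
  calc 2 * ‖x - y‖ /
      (Real.sqrt (1 + ‖x‖ ^ 2) * Real.sqrt (1 + ‖y‖ ^ 2))
      ≤ 2 * ‖x - y‖ / 1 :=
        div_le_div_of_nonneg_left (by positivity) one_pos (one_le_mul_of_one_le_of_one_le h1 h2)
    _ = 2 * ‖x - y‖ := by ring

lemma ratMap_some {p q : Polynomial ℂ} {w : ℂ} (h : q.eval w ≠ 0) :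
    ratMap p q (some w) = some (p.eval w / q.eval w) := by
  simp [ratMap, h]

lemma moebius_ratMap_some (p q : Polynomial ℂ) (a b c d w : ℂ)
    (hD : c * p.eval w + d * q.eval w ≠ 0) (hpq : ¬(p.eval w = 0 ∧ q.eval w = 0)) :
    moebiusMap a b c d (ratMap p q (some w)) =
      some ((a * p.eval w + b * q.eval w) / (c * p.eval w + d * q.eval w)) := by
  by_cases hq : q.eval w = 0
  · have hp : p.eval w ≠ 0 := fun hp => hpq ⟨hp, hq⟩
    have hc : c ≠ 0 := by
      intro hc; apply hD; rw [hc, hq]; ring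
    have h0 : ratMap p q (some w) = none := by simp [ratMap, hq]
    rw [h0]
    simp only [moebiusMap, Option.elim, if_neg hc]
    congr 1
    rw [hq]
    field_simp
    ring
  · rw [ratMap_some hq]
    simp only [moebiusMap, Option.elim]
    have hcd : c * (p.eval w / q.eval w) + d = (c * p.eval w + d * q.eval w) / q.eval w := by
      field_simp
    rw [hcd, if_neg (div_ne_zero hD hq)]
    congr 1
    field_simp

/-- coeff of the polynomial built from a vector -/
lemma coeff_mkpoly {d : ℕ} (v : EuclideanSpace ℂ (Fin (d+1))) (j : ℕ) :
    (∑ i : Fin (d+1), C (v i) * X ^ (i : ℕ)).coeff j =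
      if h : j < d + 1 then v ⟨j, h⟩ else 0 := by
  rw [finset_sum_coeff]
  simp only [coeff_C_mul, coeff_X_pow]
  by_cases h : j < d + 1
  · rw [dif_pos h]
    rw [Finset.sum_eq_single (⟨j, h⟩ : Fin (d+1))]
    · simp
    · intro b _ hb
      have : j ≠ (b : ℕ) := by
        intro hh; apply hb; ext; simp [hh]
      simp [this]
    · simp
  · rw [dif_neg h]
    apply Finset.sum_eq_zero
    intro b _
    have : j ≠ (b : ℕ) := by
      intro hh; apply h; rw [hh]; exact b.2
    simp [this]

lemma natDegree_mkpoly {d : ℕ} (v : EuclideanSpace ℂ (Fin (d+1))) :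
    (∑ i : Fin (d+1), C (v i) * X ^ (i : ℕ)).natDegree ≤ d := by
  rw [natDegree_le_iff_coeff_eq_zero]
  intro m hm
  rw [coeff_mkpoly, dif_neg (by omega)]

/-- eval of a polynomial of natDegree ≤ d as a Fin (d+1) sum -/
lemma eval_fin_sum {d : ℕ} {f : Polynomial ℂ} (hf : f.natDegree ≤ d) (z : ℂ) :
    f.eval z = ∑ i : Fin (d+1), f.coeff i * z ^ (i : ℕ) := by
  rw [eval_eq_sum_range' (Nat.lt_succ_of_le hf),
    ← Fin.sum_univ_eq_sum_range (fun i => f.coeff i * z ^ i) (d+1)]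

lemma coord_dist_le {d : ℕ} (x y : EuclideanSpace ℂ (Fin (d+1))) (i : Fin (d+1)) :
    dist (x i) (y i) ≤ dist x y := by
  rw [EuclideanSpace.dist_eq]
  have h1 : dist (x i) (y i) = Real.sqrt (dist (x i) (y i) ^ 2) := by
    rw [Real.sqrt_sq dist_nonneg]
  rw [h1]
  apply Real.sqrt_le_sqrt
  exact Finset.single_le_sum (f := fun j => dist (x j) (y j) ^ 2)
    (fun j _ => sq_nonneg _) (Finset.mem_univ i)

/-- a compact subset of the sphere avoiding ∞ comes from a compact set in ℂ -/
lemma compact_preimage {K : Set (Option ℂ)} (hK : IsCompact K) (hinf : none ∉ K) :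
    IsCompact {w : ℂ | some w ∈ K} := by
  have hcl : IsClosed K := hK.isClosed
  have hcont : Continuous (fun w : ℂ => (some w : Option ℂ)) :=
    OnePoint.continuous_coe
  have hScl : IsClosed {w : ℂ | some w ∈ K} := hcl.preimage hcont
  have hopen : ∀ r : ℕ, IsOpen ((fun w : ℂ => (some w : Option ℂ)) '' Metric.ball 0 r) :=
    fun r => OnePoint.isOpenEmbedding_coe.isOpenMap _ Metric.isOpen_ball
  have hcover : K ⊆ ⋃ r : ℕ, (fun w : ℂ => (some w : Option ℂ)) '' Metric.ball 0 r := by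
    intro z hz
    cases z with
    | none => exact absurd hz hinf
    | some w =>
      refine Set.mem_iUnion.2 ⟨⌊‖w‖⌋₊ + 1, ⟨w, ?_, rfl⟩⟩
      simp only [Metric.mem_ball, Complex.dist_eq, sub_zero]
      push_cast
      exact Nat.lt_floor_add_one _
  obtain ⟨t, ht⟩ := hK.elim_finite_subcover _ hopen hcover
  have hbdd : Bornology.IsBounded {w : ℂ | some w ∈ K} := by
    apply (Metric.isBounded_ball (x := (0:ℂ)) (r := ((t.sup id : ℕ) : ℝ))).subset
    intro w hw
    obtain ⟨r, hrt, hr⟩ := Set.mem_iUnion₂.1 (ht hw)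
    obtain ⟨w', hw', hww'⟩ := hr
    have : w' = w := Option.some_injective ℂ hww'
    subst this
    refine Metric.mem_ball.2 (lt_of_lt_of_le (Metric.mem_ball.1 hw') ?_)
    exact_mod_cast Nat.cast_le.2 (Finset.le_sup (f := id) hrt)
  exact Metric.isCompact_iff_isClosed_bounded.2 ⟨hScl, hbdd⟩

lemma sum_eval_diff {d : ℕ} (x y : EuclideanSpace ℂ (Fin (d+1))) (w : ℂ) (R δ' : ℝ)
    (hR : 1 ≤ R) (hw : ‖w‖ ≤ R) (hδ' : 0 ≤ δ')
    (hc : ∀ i, ‖x i - y i‖ ≤ δ') :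
    ‖∑ i : Fin (d+1), x i * w^(i:ℕ) - ∑ i : Fin (d+1), y i * w^(i:ℕ)‖ ≤
      ((d:ℝ)+1) * δ' * R^d := by
  rw [← Finset.sum_sub_distrib]
  have h1 : ∀ i : Fin (d+1), x i * w^(i:ℕ) - y i * w^(i:ℕ) = (x i - y i) * w^(i:ℕ) := by
    intro i; ring
  simp_rw [h1]
  calc ‖∑ i : Fin (d+1), (x i - y i) * w^(i:ℕ)‖
      ≤ ∑ i : Fin (d+1), ‖(x i - y i) * w^(i:ℕ)‖ :=
        norm_sum_le _ _
    _ ≤ ∑ _i : Fin (d+1), δ' * R^d := by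
        apply Finset.sum_le_sum
        intro i _
        rw [norm_mul, norm_pow]
        apply mul_le_mul (hc i) ?_ (by positivity) hδ'
        calc ‖w‖ ^ (i:ℕ) ≤ R ^ (i:ℕ) :=
              pow_le_pow_left₀ (norm_nonneg _) hw _
          _ ≤ R ^ d := pow_le_pow_right₀ hR (Nat.lt_succ_iff.mp i.2)
    _ = ((d:ℝ)+1) * δ' * R^d := by
        rw [Finset.sum_const, Finset.card_univ, Fintype.card_fin, nsmul_eq_mul]
        push_cast; ring

lemma coprime_eval {p q : Polynomial ℂ} (h : IsCoprime p q) (w : ℂ) :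
    ¬(p.eval w = 0 ∧ q.eval w = 0) := by
  obtain ⟨u, v, huv⟩ := h
  rintro ⟨hp, hq⟩
  have := congrArg (Polynomial.eval w) huv
  simp [hp, hq] at this

end Helpers

open scoped InnerProductSpace

set_option maxHeartbeats 1000000 in
/-- every sequence of rational maps of a fixed degree `d ≥ 1` admits a
subsequence and a sequence of Möbius transformations `M k` such that `M k ∘ f (n k)`
converges, uniformly (for the chordal metric) on compact subsets avoiding a finite set
`E`, to a nonconstant rational map. -/
theorem rescaling_limit_of_rational_maps (d : ℕ) (hd : 1 ≤ d)
    (p q : ℕ → Polynomial ℂ) (hco : ∀ n, IsCoprime (p n) (q n))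
    (hdeg : ∀ n, max (p n).natDegree (q n).natDegree = d) :
    ∃ nk : ℕ → ℕ, StrictMono nk ∧
    ∃ M : ℕ → Option ℂ → Option ℂ, (∀ k, IsMoebius (M k)) ∧
    ∃ P Q : Polynomial ℂ, IsCoprime P Q ∧ 1 ≤ max P.natDegree Q.natDegree ∧
    ∃ E : Set (Option ℂ), E.Finite ∧
      ∀ K : Set (Option ℂ), IsCompact K → Disjoint K E →
        ∀ ε : ℝ, 0 < ε → ∃ N : ℕ, ∀ k ≥ N, ∀ z ∈ K,
          chordal (M k (ratMap (p (nk k)) (q (nk k)) z)) (ratMap P Q z) < ε := by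
  classical
  -- basic nondegeneracy facts
  have hp0 : ∀ n, p n ≠ 0 := by
    intro n hn
    have : IsUnit (q n) := (isCoprime_zero_left).1 (hn ▸ hco n)
    have h1 : (q n).natDegree = 0 := Polynomial.natDegree_eq_zero_of_isUnit this
    have := hdeg n
    rw [hn, h1] at this
    simp at this
    omega
  have hq0 : ∀ n, q n ≠ 0 := by
    intro n hn
    have : IsUnit (p n) := (isCoprime_zero_right).1 (hn ▸ hco n)
    have h1 : (p n).natDegree = 0 := Polynomial.natDegree_eq_zero_of_isUnit this
    have := hdeg n
    rw [hn, h1] at this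
    simp at this
    omega
  have hdp : ∀ n, (p n).natDegree ≤ d := fun n => (hdeg n) ▸ le_max_left _ _
  have hdq : ∀ n, (q n).natDegree ≤ d := fun n => (hdeg n) ▸ le_max_right _ _
  -- coefficient vectors
  let v1 : ℕ → EuclideanSpace ℂ (Fin (d+1)) := fun n => WithLp.toLp 2 (fun i => (p n).coeff i)
  let v2 : ℕ → EuclideanSpace ℂ (Fin (d+1)) := fun n => WithLp.toLp 2 (fun i => (q n).coeff i)
  have happly1 : ∀ n (t : ℂ) (i : Fin (d+1)), (t • v1 n) i = t * (p n).coeff i := fun _ _ _ => rfl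
  have happly2 : ∀ n (s t : ℂ) (i : Fin (d+1)),
      (s • v1 n + t • v2 n) i = s * (p n).coeff i + t * (q n).coeff i := fun _ _ _ _ => rfl
  have hv1 : ∀ n, v1 n ≠ 0 := by
    intro n hn
    apply Polynomial.leadingCoeff_ne_zero.2 (hp0 n)
    have : v1 n ⟨(p n).natDegree, Nat.lt_succ_of_le (hdp n)⟩ = 0 := by rw [hn]; rfl
    exact this
  have hprop : ∀ n, ∀ t : ℂ, v2 n ≠ t • v1 n := by
    intro n t hn
    have hqp : q n = Polynomial.C t * p n := by
      apply Polynomial.ext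
      intro i
      have hd1 := hdq n
      have hd2 := hdp n
      by_cases hi : i < d + 1
      · have := congrArg (fun v : EuclideanSpace ℂ (Fin (d+1)) => v ⟨i, hi⟩) hn
        simp only at this
        rw [Polynomial.coeff_C_mul]
        exact this
      · have h1 : (q n).coeff i = 0 :=
          Polynomial.coeff_eq_zero_of_natDegree_lt (by omega : (q n).natDegree < i)
        have h2 : (p n).coeff i = 0 :=
          Polynomial.coeff_eq_zero_of_natDegree_lt (by omega : (p n).natDegree < i)
        rw [Polynomial.coeff_C_mul, h1, h2, mul_zero]
    have hunit : IsUnit (p n) := by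
      apply (hco n).isUnit_of_dvd' dvd_rfl
      exact hqp ▸ Dvd.intro_left _ rfl
    have h1 : (p n).natDegree = 0 := Polynomial.natDegree_eq_zero_of_isUnit hunit
    have ht : t ≠ 0 := by
      intro ht; rw [ht] at hqp; simp at hqp; exact hq0 n hqp
    have h2 : (q n).natDegree = 0 := by
      rw [hqp, Polynomial.natDegree_C_mul ht, h1]
    have := hdeg n
    rw [h1, h2] at this
    simp at this
    omega
  -- Gram-Schmidt normalization
  choose A B G hA hG hnorm1 hnorm2 hinner using
    fun n => gs_two (v1 n) (v2 n) (hv1 n) (hprop n)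
  let u1 : ℕ → EuclideanSpace ℂ (Fin (d+1)) := fun n => A n • v1 n
  let u2 : ℕ → EuclideanSpace ℂ (Fin (d+1)) := fun n => B n • v1 n + G n • v2 n
  -- compactness of the product of spheres
  have hsph : IsCompact ((Metric.sphere (0 : EuclideanSpace ℂ (Fin (d+1))) 1) ×ˢ
      (Metric.sphere (0 : EuclideanSpace ℂ (Fin (d+1))) 1)) :=
    (isCompact_sphere _ _).prod (isCompact_sphere _ _)
  have hmem : ∀ n, (u1 n, u2 n) ∈ (Metric.sphere (0 : EuclideanSpace ℂ (Fin (d+1))) 1) ×ˢ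
      (Metric.sphere (0 : EuclideanSpace ℂ (Fin (d+1))) 1) := by
    intro n
    constructor
    · exact mem_sphere_zero_iff_norm.2 (hnorm1 n)
    · exact mem_sphere_zero_iff_norm.2 (hnorm2 n)
  obtain ⟨⟨U1, U2⟩, hUmem, φ, hφ, hconv⟩ := hsph.tendsto_subseq hmem
  have hU1norm : ‖U1‖ = 1 := mem_sphere_zero_iff_norm.1 hUmem.1
  have hU2norm : ‖U2‖ = 1 := mem_sphere_zero_iff_norm.1 hUmem.2
  have hU1ne : U1 ≠ 0 := by intro h; rw [h] at hU1norm; simp at hU1norm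
  have hconv1 : Filter.Tendsto (fun k => u1 (φ k)) Filter.atTop (nhds U1) :=
    (continuous_fst.tendsto _).comp hconv
  have hconv2 : Filter.Tendsto (fun k => u2 (φ k)) Filter.atTop (nhds U2) :=
    (continuous_snd.tendsto _).comp hconv
  have hUinner : ⟪U1, U2⟫_ℂ = 0 := by
    have h1 : Filter.Tendsto (fun k => ⟪u1 (φ k), u2 (φ k)⟫_ℂ) Filter.atTop
        (nhds ⟪U1, U2⟫_ℂ) := hconv1.inner hconv2
    have h2 : (fun k => ⟪u1 (φ k), u2 (φ k)⟫_ℂ) = fun _ => (0:ℂ) := by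
      funext k; exact hinner (φ k)
    rw [h2] at h1
    exact (tendsto_nhds_unique tendsto_const_nhds h1).symm
  -- limit polynomials
  set P₀ : Polynomial ℂ := ∑ i : Fin (d+1), Polynomial.C (U1 i) * Polynomial.X ^ (i : ℕ)
    with hP₀def
  set Q₀ : Polynomial ℂ := ∑ i : Fin (d+1), Polynomial.C (U2 i) * Polynomial.X ^ (i : ℕ)
    with hQ₀def
  have hP₀coeff : ∀ i : Fin (d+1), P₀.coeff i = U1 i := by
    intro i; rw [hP₀def, coeff_mkpoly, dif_pos i.2]
  have hQ₀coeff : ∀ i : Fin (d+1), Q₀.coeff i = U2 i := by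
    intro i; rw [hQ₀def, coeff_mkpoly, dif_pos i.2]
  have hP₀ne : P₀ ≠ 0 := by
    intro h
    apply hU1ne
    ext i
    have := hP₀coeff i
    rw [h] at this
    simpa using this.symm
  have hQ₀ne : Q₀ ≠ 0 := by
    intro h
    have hU2ne : U2 ≠ 0 := by intro hh; rw [hh] at hU2norm; simp at hU2norm
    apply hU2ne
    ext i
    have := hQ₀coeff i
    rw [h] at this
    simpa using this.symm
  have hdP₀ : P₀.natDegree ≤ d := natDegree_mkpoly U1
  have hdQ₀ : Q₀.natDegree ≤ d := natDegree_mkpoly U2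
  -- gcd and the limit map
  set g : Polynomial ℂ := EuclideanDomain.gcd P₀ Q₀ with hgdef
  have hgne : g ≠ 0 := by
    intro h
    rw [hgdef, EuclideanDomain.gcd_eq_zero_iff] at h
    exact hP₀ne h.1
  obtain ⟨P, hP⟩ : g ∣ P₀ := EuclideanDomain.gcd_dvd_left P₀ Q₀
  obtain ⟨Q, hQ⟩ : g ∣ Q₀ := EuclideanDomain.gcd_dvd_right P₀ Q₀
  have hPne : P ≠ 0 := by
    intro h; rw [h, mul_zero] at hP; exact hP₀ne hP
  have hQne : Q ≠ 0 := by
    intro h; rw [h, mul_zero] at hQ; exact hQ₀ne hQ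
  have hcoprime : IsCoprime P Q := by
    refine ⟨EuclideanDomain.gcdA P₀ Q₀, EuclideanDomain.gcdB P₀ Q₀, ?_⟩
    apply mul_left_cancel₀ hgne
    have hab := EuclideanDomain.gcd_eq_gcd_ab P₀ Q₀
    calc g * (EuclideanDomain.gcdA P₀ Q₀ * P + EuclideanDomain.gcdB P₀ Q₀ * Q)
        = P₀ * EuclideanDomain.gcdA P₀ Q₀ + Q₀ * EuclideanDomain.gcdB P₀ Q₀ := by
          rw [hP, hQ]; ring
      _ = g := by rw [hgdef]; exact hab.symm
      _ = g * 1 := by rw [mul_one]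
  have hdeg1 : 1 ≤ max P.natDegree Q.natDegree := by
    by_contra hcon
    push_neg at hcon
    have hl1 := le_max_left P.natDegree Q.natDegree
    have hl2 := le_max_right P.natDegree Q.natDegree
    have hPd : P.natDegree = 0 := by omega
    have hQd : Q.natDegree = 0 := by omega
    have hPC : P = Polynomial.C (P.coeff 0) := Polynomial.eq_C_of_natDegree_eq_zero hPd
    have hQC : Q = Polynomial.C (Q.coeff 0) := Polynomial.eq_C_of_natDegree_eq_zero hQd
    set a : ℂ := P.coeff 0 with hadef
    set b : ℂ := Q.coeff 0 with hbdef
    have ha : a ≠ 0 := by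
      intro h; apply hPne; rw [hPC, h]; simp
    have hb : b ≠ 0 := by
      intro h; apply hQne; rw [hQC, h]; simp
    have hkey : Polynomial.C b * P₀ = Polynomial.C a * Q₀ := by
      rw [hP, hQ, hPC, hQC]; ring
    have hcoeffs : ∀ i : Fin (d+1), b * U1 i = a * U2 i := by
      intro i
      have := congrArg (fun f : Polynomial ℂ => f.coeff i) hkey
      simp only [Polynomial.coeff_C_mul] at this
      rw [hP₀coeff i, hQ₀coeff i] at this
      exact this
    have hvec : a • U2 = b • U1 := by
      ext i
      show a * U2 i = b * U1 i
      exact (hcoeffs i).symm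
    have h1 : ⟪U1, a • U2⟫_ℂ = ⟪U1, b • U1⟫_ℂ := by rw [hvec]
    rw [inner_smul_right, inner_smul_right, hUinner, inner_self_eq_norm_sq_to_K,
      hU1norm, mul_zero] at h1
    simp at h1
    exact absurd h1.symm hb
  -- the exceptional set
  set Z : Set ℂ := {w : ℂ | Q₀.eval w = 0} with hZdef
  have hZfin : Z.Finite := by
    apply Set.Finite.subset Q₀.roots.toFinset.finite_toSet
    intro w hw
    rw [Finset.mem_coe, Multiset.mem_toFinset, Polynomial.mem_roots hQ₀ne]
    exact hw
  refine ⟨φ, hφ, fun k => moebiusMap (A (φ k)) 0 (B (φ k)) (G (φ k)), ?_, P, Q, hcoprime, hdeg1,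
    insert none ((fun w : ℂ => (some w : Option ℂ)) '' Z), (hZfin.image _).insert _, ?_⟩
  · intro k
    exact ⟨A (φ k), 0, B (φ k), G (φ k), by
      simpa using mul_ne_zero (hA (φ k)) (hG (φ k)), rfl⟩
  intro K hKc hKd ε hε
  have hnoneK : none ∉ K := fun h => Set.disjoint_left.1 hKd h (Set.mem_insert _ _)
  set S : Set ℂ := {w : ℂ | some w ∈ K} with hSdef
  have hSc : IsCompact S := compact_preimage hKc hnoneK
  have hSQ : ∀ w ∈ S, Q₀.eval w ≠ 0 := by
    intro w hw hzero
    exact Set.disjoint_left.1 hKd hw (Set.mem_insert_of_mem _ ⟨w, hzero, rfl⟩)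
  rcases S.eq_empty_or_nonempty with hSe | hSne
  · refine ⟨0, fun k _ z hz => ?_⟩
    cases z with
    | none => exact absurd hz hnoneK
    | some w => exact absurd (show w ∈ S from hz) (by rw [hSe]; exact Set.notMem_empty w)
  -- min and max values on S
  obtain ⟨x₀, hx₀S, hx₀⟩ := hSc.exists_isMinOn hSne
    ((continuous_norm.comp Q₀.continuous).continuousOn)
  set m : ℝ := ‖Q₀.eval x₀‖ with hmdef
  have hm : 0 < m := norm_pos_iff.2 (hSQ x₀ hx₀S)
  have hmle : ∀ w ∈ S, m ≤ ‖Q₀.eval w‖ := fun w hw => hx₀ hw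
  obtain ⟨x₁, hx₁S, hx₁⟩ := hSc.exists_isMaxOn hSne
    ((continuous_norm.comp P₀.continuous).continuousOn)
  obtain ⟨x₂, hx₂S, hx₂⟩ := hSc.exists_isMaxOn hSne
    ((continuous_norm.comp Q₀.continuous).continuousOn)
  set Cb : ℝ := max (‖P₀.eval x₁‖) (‖Q₀.eval x₂‖) with hCdef
  have hC0 : 0 ≤ Cb := le_trans (norm_nonneg _) (le_max_left _ _)
  have hCP : ∀ w ∈ S, ‖P₀.eval w‖ ≤ Cb :=
    fun w hw => le_trans (hx₁ hw) (le_max_left _ _)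
  have hCQ : ∀ w ∈ S, ‖Q₀.eval w‖ ≤ Cb :=
    fun w hw => le_trans (hx₂ hw) (le_max_right _ _)
  obtain ⟨r, hr⟩ := hSc.isBounded.subset_closedBall 0
  set R : ℝ := max r 1 with hRdef
  have hR1 : 1 ≤ R := le_max_right _ _
  have hRS : ∀ w ∈ S, ‖w‖ ≤ R := by
    intro w hw
    have := hr hw
    rw [Metric.mem_closedBall, Complex.dist_eq, sub_zero] at this
    exact le_trans this (le_max_left _ _)
  set δ : ℝ := min (m/2) (ε * m^2 / (8 * (Cb+1))) with hδdef
  have hδpos : 0 < δ := lt_min (by positivity) (by positivity)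
  have hδm : δ ≤ m/2 := min_le_left _ _
  have hδε : δ ≤ ε * m^2 / (8 * (Cb+1)) := min_le_right _ _
  have hRd : (0:ℝ) < ((d:ℝ)+1) * R^d := by positivity
  set δ' : ℝ := δ / (((d:ℝ)+1) * R^d) with hδ'def
  have hδ'pos : 0 < δ' := div_pos hδpos hRd
  have hδ'val : ((d:ℝ)+1) * δ' * R^d = δ := by
    rw [hδ'def]; field_simp
  obtain ⟨N₁, hN₁⟩ := Metric.tendsto_atTop.1 hconv1 δ' hδ'pos
  obtain ⟨N₂, hN₂⟩ := Metric.tendsto_atTop.1 hconv2 δ' hδ'pos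
  refine ⟨max N₁ N₂, fun k hk z hz => ?_⟩
  cases z with
  | none => exact absurd hz hnoneK
  | some w =>
  have hwS : w ∈ S := hz
  have hQ₀w : Q₀.eval w ≠ 0 := hSQ w hwS
  have hc1 : ∀ i : Fin (d+1), ‖u1 (φ k) i - U1 i‖ ≤ δ' := by
    intro i
    have h := coord_dist_le (u1 (φ k)) U1 i
    have h2 := hN₁ k (le_trans (le_max_left _ _) hk)
    rw [Complex.dist_eq] at h
    exact le_of_lt (lt_of_le_of_lt h h2)
  have hc2 : ∀ i : Fin (d+1), ‖u2 (φ k) i - U2 i‖ ≤ δ' := by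
    intro i
    have h := coord_dist_le (u2 (φ k)) U2 i
    have h2 := hN₂ k (le_trans (le_max_right _ _) hk)
    rw [Complex.dist_eq] at h
    exact le_of_lt (lt_of_le_of_lt h h2)
  set Nk : ℂ := A (φ k) * (p (φ k)).eval w with hNkdef
  set Dk : ℂ := B (φ k) * (p (φ k)).eval w + G (φ k) * (q (φ k)).eval w with hDkdef
  have hNk : Nk = ∑ i : Fin (d+1), u1 (φ k) i * w ^ (i:ℕ) := by
    rw [hNkdef, eval_fin_sum (hdp (φ k)) w, Finset.mul_sum]
    apply Finset.sum_congr rfl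
    intro i _
    rw [show u1 (φ k) i = A (φ k) * (p (φ k)).coeff i from happly1 (φ k) (A (φ k)) i]
    ring
  have hDk : Dk = ∑ i : Fin (d+1), u2 (φ k) i * w ^ (i:ℕ) := by
    rw [hDkdef, eval_fin_sum (hdp (φ k)) w, eval_fin_sum (hdq (φ k)) w,
      Finset.mul_sum, Finset.mul_sum, ← Finset.sum_add_distrib]
    apply Finset.sum_congr rfl
    intro i _
    rw [show u2 (φ k) i = B (φ k) * (p (φ k)).coeff i + G (φ k) * (q (φ k)).coeff i from
      happly2 (φ k) (B (φ k)) (G (φ k)) i]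
    ring
  have hN₀ : P₀.eval w = ∑ i : Fin (d+1), U1 i * w ^ (i:ℕ) := by
    rw [eval_fin_sum hdP₀ w]
    exact Finset.sum_congr rfl fun i _ => by rw [hP₀coeff i]
  have hD₀ : Q₀.eval w = ∑ i : Fin (d+1), U2 i * w ^ (i:ℕ) := by
    rw [eval_fin_sum hdQ₀ w]
    exact Finset.sum_congr rfl fun i _ => by rw [hQ₀coeff i]
  have hNdiff : ‖Nk - P₀.eval w‖ ≤ δ := by
    rw [hNk, hN₀, ← hδ'val]
    exact sum_eval_diff _ _ w R δ' hR1 (hRS w hwS) (le_of_lt hδ'pos) hc1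
  have hDdiff : ‖Dk - Q₀.eval w‖ ≤ δ := by
    rw [hDk, hD₀, ← hδ'val]
    exact sum_eval_diff _ _ w R δ' hR1 (hRS w hwS) (le_of_lt hδ'pos) hc2
  have hDklb : m/2 ≤ ‖Dk‖ := by
    have h1 := hmle w hwS
    have tri := norm_add_le Dk (Q₀.eval w - Dk)
    rw [show Dk + (Q₀.eval w - Dk) = Q₀.eval w by ring] at tri
    have habs2 : ‖Q₀.eval w - Dk‖ = ‖Dk - Q₀.eval w‖ :=
      norm_sub_rev _ _
    linarith
  have hDkne : Dk ≠ 0 := by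
    intro h
    rw [h] at hDklb
    simp at hDklb
    nlinarith
  show chordal (moebiusMap (A (φ k)) 0 (B (φ k)) (G (φ k))
    (ratMap (p (φ k)) (q (φ k)) (some w))) (ratMap P Q (some w)) < ε
  have hlhs : moebiusMap (A (φ k)) 0 (B (φ k)) (G (φ k))
      (ratMap (p (φ k)) (q (φ k)) (some w)) = some (Nk / Dk) := by
    rw [moebius_ratMap_some (p (φ k)) (q (φ k)) _ _ _ _ _ hDkne
      (coprime_eval (hco (φ k)) w)]
    congr 1
    rw [hNkdef]
    ring_nf
    rw [hDkdef]; ring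
  have hgw : Polynomial.eval w g ≠ 0 := by
    intro h
    apply hQ₀w
    rw [hQ, Polynomial.eval_mul, h, zero_mul]
  have hQw : Polynomial.eval w Q ≠ 0 := by
    intro h
    apply hQ₀w
    rw [hQ, Polynomial.eval_mul, h, mul_zero]
  have hrhs : ratMap P Q (some w) = some (P.eval w / Q.eval w) := ratMap_some hQw
  have hratio : P.eval w / Q.eval w = P₀.eval w / Q₀.eval w := by
    rw [hP, hQ, Polynomial.eval_mul, Polynomial.eval_mul, mul_div_mul_left _ _ hgw]
  rw [hlhs, hrhs, hratio]
  have hfinal : 2 * ‖Nk/Dk - P₀.eval w / Q₀.eval w‖ < ε := by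
    have hdiv : Nk/Dk - P₀.eval w/Q₀.eval w =
        (Nk * Q₀.eval w - P₀.eval w * Dk)/(Dk * Q₀.eval w) := by
      rw [div_sub_div _ _ hDkne hQ₀w]; ring_nf
    have hnum : ‖Nk * Q₀.eval w - P₀.eval w * Dk‖ ≤ 2 * Cb * δ := by
      rw [show Nk * Q₀.eval w - P₀.eval w * Dk =
        (Nk - P₀.eval w) * Q₀.eval w + P₀.eval w * (Q₀.eval w - Dk) by ring]
      have t1 := norm_add_le ((Nk - P₀.eval w) * Q₀.eval w)
        (P₀.eval w * (Q₀.eval w - Dk))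
      rw [norm_mul, norm_mul] at t1
      have habs2 : ‖Q₀.eval w - Dk‖ = ‖Dk - Q₀.eval w‖ :=
        norm_sub_rev _ _
      rw [habs2] at t1
      have b1 : ‖Nk - P₀.eval w‖ * ‖Q₀.eval w‖ ≤ δ * Cb :=
        mul_le_mul hNdiff (hCQ w hwS) (norm_nonneg _) (le_of_lt hδpos)
      have b2 : ‖P₀.eval w‖ * ‖Dk - Q₀.eval w‖ ≤ Cb * δ :=
        mul_le_mul (hCP w hwS) hDdiff (norm_nonneg _) hC0
      linarith
    have habs : ‖Nk/Dk - P₀.eval w/Q₀.eval w‖ ≤ (2 * Cb * δ) / ((m/2) * m) := by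
      rw [hdiv, norm_div, norm_mul]
      apply div_le_div₀ (by positivity) hnum (by positivity)
      exact mul_le_mul hDklb (hmle w hwS) (le_of_lt hm) (norm_nonneg _)
    rw [le_div_iff₀ (by positivity : (0:ℝ) < (m/2) * m)] at habs
    rw [le_div_iff₀ (by positivity : (0:ℝ) < 8 * (Cb+1))] at hδε
    nlinarith [mul_pos hm hm, norm_nonneg (Nk/Dk - P₀.eval w/Q₀.eval w)]
  exact lt_of_le_of_lt (chordal_le _ _) hfinal


end
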